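/- The polarized 3-ψ's rule holds over the quaternions: for all ψ, φ, χ ∈ ℍ², (ψ·φ)χ + (φ·χ)ψ + (χ·ψ)φ = 0, where ψ·φ = (ψφ† + φψ†)~ denotes the trace reversal of ψφ† + φψ†. -/

import Mathlib

open Matrix
set_option maxHeartbeats 4000000

/-- The outer product `ψφ†`. -/
noncomputable def qouter (ψ φ : Fin 2 → Quaternion ℝ) : Matrix (Fin 2) (Fin 2) (Quaternion ℝ) :=
  Matrix.of fun i j => ψ i * star (φ j)

/-- Trace reversal `M̃ = M - (tr M)·1`. -/
noncomputable def qtilde (M : Matrix (Fin 2) (Fin 2) (Quaternion ℝ)) :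
    Matrix (Fin 2) (Fin 2) (Quaternion ℝ) :=
  M - (Matrix.trace M) • (1 : Matrix (Fin 2) (Fin 2) (Quaternion ℝ))

/-- The symmetric spinor bracket `ψ·φ = (ψφ† + φψ†)~`. -/
noncomputable def qdot (ψ φ : Fin 2 → Quaternion ℝ) : Matrix (Fin 2) (Fin 2) (Quaternion ℝ) :=
  qtilde (qouter ψ φ + qouter φ ψ)

/-- The polarized 3-ψ's rule over the quaternions:
`(ψ·φ)χ + (φ·χ)ψ + (χ·ψ)φ = 0`. -/
theorem polarized_three_psis_rule (ψ φ χ : Fin 2 → Quaternion ℝ) :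
    qdot ψ φ *ᵥ χ + qdot φ χ *ᵥ ψ + qdot χ ψ *ᵥ φ = 0 := by
  funext i
  simp only [qdot, qtilde, qouter, Matrix.trace, Matrix.diag, Matrix.mulVec, dotProduct,
    Matrix.sub_apply, Matrix.add_apply, Matrix.smul_apply, Matrix.one_apply, Matrix.of_apply,
    Fin.sum_univ_two, Pi.add_apply, Pi.zero_apply, smul_eq_mul]
  fin_cases i <;>
  · simp only [Fin.isValue, if_true, if_false, Fin.zero_eta, Fin.mk_one, one_ne_zero,
      zero_ne_one, mul_one, mul_zero, ite_true, ite_false, reduceIte]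
    ext <;>
    · simp [Quaternion.re_mul, Quaternion.imI_mul, Quaternion.imJ_mul, Quaternion.imK_mul,
        Quaternion.re_star, Quaternion.imI_star, Quaternion.imJ_star, Quaternion.imK_star,
        Quaternion.re_zero, Quaternion.imI_zero, Quaternion.imJ_zero, Quaternion.imK_zero]
      ring
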